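/- (A spray metrizable by a degenerate Finsler function.) On ℝ² × ℝ² consider the spray G¹ = y¹y², G² = −½(y²)² (the system ẍ¹ + 2ẋ¹ẋ² = 0, ẍ² − (ẋ²)² = 0), with N^j_i = ∂G^j/∂y^i. Then F(x,y) = e^{−x²} y² (where x² is the second base coordinate) is positively 1-homogeneous in y, positive on the region {y² > 0}, satisfies d_hF = 0 everywhere (∂F/∂x^i = Σ_j N^j_i ∂F/∂y^j for i = 1,2), and the vertical Hessian (½ ∂²F²/∂y^i∂y^j) has rank exactly 1 at every point; thus F is a degenerate Finsler function whose geodesic spray is the given spray. -/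

import Mathlib

open Real Finset

/-- Partial derivative with respect to the base coordinate `x^i`. -/
noncomputable def pdx {n : ℕ} (f : ((Fin n → ℝ) × (Fin n → ℝ)) → ℝ) (i : Fin n)
    (p : (Fin n → ℝ) × (Fin n → ℝ)) : ℝ :=
  fderiv ℝ f p (Pi.single i 1, 0)

/-- Partial derivative with respect to the fibre coordinate `y^i`. -/
noncomputable def pdy {n : ℕ} (f : ((Fin n → ℝ) × (Fin n → ℝ)) → ℝ) (i : Fin n)
    (p : (Fin n → ℝ) × (Fin n → ℝ)) : ℝ :=
  fderiv ℝ f p (0, Pi.single i 1)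

/-- Partial derivative of a function on the base with respect to `x^i`. -/
noncomputable def pdb {n : ℕ} (f : (Fin n → ℝ) → ℝ) (i : Fin n) (x : Fin n → ℝ) : ℝ :=
  fderiv ℝ f x (Pi.single i 1)

/-- Partial derivative with respect to the full coordinates `(x, y)` of `ℝ²ⁿ`,
indexed by `Fin n ⊕ Fin n` (`inl` = base directions, `inr` = fibre directions). -/
noncomputable def pdz {n : ℕ} (f : ((Fin n → ℝ) × (Fin n → ℝ)) → ℝ) (a : Fin n ⊕ Fin n)
    (p : (Fin n → ℝ) × (Fin n → ℝ)) : ℝ :=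
  match a with
  | Sum.inl i => pdx f i p
  | Sum.inr i => pdy f i p

/-- The spray vector field `S = yᵏ ∂/∂xᵏ - 2Gᵏ ∂/∂yᵏ` applied to a function. -/
noncomputable def sprayOp {n : ℕ} (G : Fin n → ((Fin n → ℝ) × (Fin n → ℝ)) → ℝ)
    (f : ((Fin n → ℝ) × (Fin n → ℝ)) → ℝ) (p : (Fin n → ℝ) × (Fin n → ℝ)) : ℝ :=
  ∑ k, (p.2 k * pdx f k p - 2 * G k p * pdy f k p)

/-- The flat spray `S₀ = yᵏ ∂/∂xᵏ` applied to a function. -/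
noncomputable def flatOp {n : ℕ} (f : ((Fin n → ℝ) × (Fin n → ℝ)) → ℝ)
    (p : (Fin n → ℝ) × (Fin n → ℝ)) : ℝ :=
  ∑ k, p.2 k * pdx f k p

/-- The coefficients `N^i_j = ∂G^i/∂y^j` of the nonlinear connection. -/
noncomputable def Ncon {n : ℕ} (G : Fin n → ((Fin n → ℝ) × (Fin n → ℝ)) → ℝ)
    (i j : Fin n) : ((Fin n → ℝ) × (Fin n → ℝ)) → ℝ :=
  fun p => pdy (G i) j p

/-- The components `R^i_j = 2 ∂G^i/∂x^j - S(N^i_j) - N^i_k N^k_j` of the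
Jacobi endomorphism. -/
noncomputable def jacobiR {n : ℕ} (G : Fin n → ((Fin n → ℝ) × (Fin n → ℝ)) → ℝ)
    (i j : Fin n) (p : (Fin n → ℝ) × (Fin n → ℝ)) : ℝ :=
  2 * pdx (G i) j p - sprayOp G (Ncon G i j) p - ∑ k, Ncon G i k p * Ncon G k j p

/-- The domain `Ω × (ℝⁿ ∖ {0})`. -/
def sprayDom {n : ℕ} (Ω : Set (Fin n → ℝ)) : Set ((Fin n → ℝ) × (Fin n → ℝ)) :=
  Ω ×ˢ {y | y ≠ 0}

/-- Squared Euclidean norm `|v|²` on `ℝⁿ`. -/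
def nsq {n : ℕ} (v : Fin n → ℝ) : ℝ := ∑ i, v i ^ 2

/-- Euclidean inner product `⟨v, w⟩` on `ℝⁿ`. -/
def dotp {n : ℕ} (v w : Fin n → ℝ) : ℝ := ∑ i, v i * w i


noncomputable def X1 : ((Fin 2 → ℝ) × (Fin 2 → ℝ)) →L[ℝ] ℝ :=
  (ContinuousLinearMap.proj 1).comp (ContinuousLinearMap.fst ℝ (Fin 2 → ℝ) (Fin 2 → ℝ))

noncomputable def Y (i : Fin 2) : ((Fin 2 → ℝ) × (Fin 2 → ℝ)) →L[ℝ] ℝ :=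
  (ContinuousLinearMap.proj i).comp (ContinuousLinearMap.snd ℝ (Fin 2 → ℝ) (Fin 2 → ℝ))

lemma hasF (p : (Fin 2 → ℝ) × (Fin 2 → ℝ)) :
    HasFDerivAt (fun q : (Fin 2 → ℝ) × (Fin 2 → ℝ) => Real.exp (-(q.1 1)) * q.2 1)
      (Real.exp (-(p.1 1)) • (Y 1) + p.2 1 • (Real.exp (-(p.1 1)) • (-X1))) p := by
  have hx : HasFDerivAt (fun q : (Fin 2 → ℝ) × (Fin 2 → ℝ) => q.1 1) X1 p := X1.hasFDerivAt
  have hy : HasFDerivAt (fun q : (Fin 2 → ℝ) × (Fin 2 → ℝ) => q.2 1) (Y 1) p :=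
    (Y 1).hasFDerivAt
  have he : HasFDerivAt (fun q : (Fin 2 → ℝ) × (Fin 2 → ℝ) => Real.exp (-(q.1 1)))
      (Real.exp (-(p.1 1)) • (-X1)) p :=
    by have := (Real.hasDerivAt_exp (-(p.1 1))).comp_hasFDerivAt p hx.neg; exact this
  exact he.mul hy

lemma pdx_F (i : Fin 2) (p : (Fin 2 → ℝ) × (Fin 2 → ℝ)) :
    pdx (fun q : (Fin 2 → ℝ) × (Fin 2 → ℝ) => Real.exp (-(q.1 1)) * q.2 1) i p
      = -(Real.exp (-(p.1 1)) * p.2 1 * (Pi.single i 1 : Fin 2 → ℝ) 1) := by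
  rw [pdx, (hasF p).fderiv]
  simp [X1, Y]
  ring

lemma pdy_F (i : Fin 2) (p : (Fin 2 → ℝ) × (Fin 2 → ℝ)) :
    pdy (fun q : (Fin 2 → ℝ) × (Fin 2 → ℝ) => Real.exp (-(q.1 1)) * q.2 1) i p
      = Real.exp (-(p.1 1)) * (Pi.single i 1 : Fin 2 → ℝ) 1 := by
  rw [pdy, (hasF p).fderiv]
  simp [X1, Y]

lemma pdy_G0 (i : Fin 2) (p : (Fin 2 → ℝ) × (Fin 2 → ℝ)) :
    pdy (fun q : (Fin 2 → ℝ) × (Fin 2 → ℝ) => q.2 0 * q.2 1) i p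
      = p.2 0 * (Pi.single i 1 : Fin 2 → ℝ) 1 + p.2 1 * (Pi.single i 1 : Fin 2 → ℝ) 0 := by
  have h : HasFDerivAt (fun q : (Fin 2 → ℝ) × (Fin 2 → ℝ) => q.2 0 * q.2 1)
      (p.2 0 • (Y 1) + p.2 1 • (Y 0)) p := (Y 0).hasFDerivAt.mul (Y 1).hasFDerivAt
  rw [pdy, h.fderiv]
  simp [Y]

lemma pdy_G1 (i : Fin 2) (p : (Fin 2 → ℝ) × (Fin 2 → ℝ)) :
    pdy (fun q : (Fin 2 → ℝ) × (Fin 2 → ℝ) => -(1/2) * q.2 1 ^ 2) i p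
      = -(p.2 1 * (Pi.single i 1 : Fin 2 → ℝ) 1) := by
  have h2 : HasFDerivAt (fun q : (Fin 2 → ℝ) × (Fin 2 → ℝ) => q.2 1 * q.2 1)
      (p.2 1 • (Y 1) + p.2 1 • (Y 1)) p := (Y 1).hasFDerivAt.mul (Y 1).hasFDerivAt
  have h : HasFDerivAt (fun q : (Fin 2 → ℝ) × (Fin 2 → ℝ) => -(1/2) * q.2 1 ^ 2)
      ((-(1/2):ℝ) • (p.2 1 • (Y 1) + p.2 1 • (Y 1))) p := by
    have := h2.const_mul (-(1/2):ℝ)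
    simpa [pow_two] using this
  rw [pdy, h.fderiv]
  simp [Y]
  ring

lemma pdy_Fsq (j : Fin 2) (p : (Fin 2 → ℝ) × (Fin 2 → ℝ)) :
    pdy (fun q : (Fin 2 → ℝ) × (Fin 2 → ℝ) => (Real.exp (-(q.1 1)) * q.2 1) ^ 2) j p
      = (2 * (Pi.single j 1 : Fin 2 → ℝ) 1) * (Real.exp (-(p.1 1)) ^ 2 * p.2 1) := by
  have h : HasFDerivAt (fun q : (Fin 2 → ℝ) × (Fin 2 → ℝ) => (Real.exp (-(q.1 1)) * q.2 1) ^ 2)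
      ((Real.exp (-(p.1 1)) * p.2 1) •
          (Real.exp (-(p.1 1)) • (Y 1) + p.2 1 • (Real.exp (-(p.1 1)) • (-X1)))
        + (Real.exp (-(p.1 1)) * p.2 1) •
          (Real.exp (-(p.1 1)) • (Y 1) + p.2 1 • (Real.exp (-(p.1 1)) • (-X1)))) p := by
    have := (hasF p).mul (hasF p)
    simpa [pow_two, Pi.mul_def] using this
  rw [pdy, h.fderiv]
  simp [X1, Y]
  ring

lemma pdy_g (c : ℝ) (i : Fin 2) (p : (Fin 2 → ℝ) × (Fin 2 → ℝ)) :
    pdy (fun q : (Fin 2 → ℝ) × (Fin 2 → ℝ) => c * (Real.exp (-(q.1 1)) ^ 2 * q.2 1)) i p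
      = c * (Real.exp (-(p.1 1)) ^ 2 * (Pi.single i 1 : Fin 2 → ℝ) 1) := by
  have hx : HasFDerivAt (fun q : (Fin 2 → ℝ) × (Fin 2 → ℝ) => q.1 1) X1 p := X1.hasFDerivAt
  have he : HasFDerivAt (fun q : (Fin 2 → ℝ) × (Fin 2 → ℝ) => Real.exp (-(q.1 1)))
      (Real.exp (-(p.1 1)) • (-X1)) p :=
    by have := (Real.hasDerivAt_exp (-(p.1 1))).comp_hasFDerivAt p hx.neg; exact this
  have he2 : HasFDerivAt (fun q : (Fin 2 → ℝ) × (Fin 2 → ℝ) => Real.exp (-(q.1 1)) ^ 2)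
      (Real.exp (-(p.1 1)) • (Real.exp (-(p.1 1)) • (-X1))
        + Real.exp (-(p.1 1)) • (Real.exp (-(p.1 1)) • (-X1))) p := by
    have := he.mul he
    simpa [pow_two, Pi.mul_def] using this
  have h : HasFDerivAt
      (fun q : (Fin 2 → ℝ) × (Fin 2 → ℝ) => c * (Real.exp (-(q.1 1)) ^ 2 * q.2 1))
      (c • (Real.exp (-(p.1 1)) ^ 2 • (Y 1)
        + p.2 1 • (Real.exp (-(p.1 1)) • (Real.exp (-(p.1 1)) • (-X1))
            + Real.exp (-(p.1 1)) • (Real.exp (-(p.1 1)) • (-X1))))) p :=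
    (he2.mul (Y 1).hasFDerivAt).const_mul c
  rw [pdy, h.fderiv]
  simp [X1, Y]

/-- A spray metrizable by a degenerate Finsler function. For the
spray `G¹ = y¹y²`, `G² = -½(y²)²` on `ℝ² × ℝ²`, the function
`F(x,y) = e^{-x²} y²` is positively `1`-homogeneous in `y`, positive where
`y² > 0`, satisfies `d_hF = 0` everywhere, and its vertical Hessian
`(½ ∂²F²/∂y^i∂y^j)` has rank exactly `1` at every point. -/
theorem degenerate_finsler_example
    (G : Fin 2 → ((Fin 2 → ℝ) × (Fin 2 → ℝ)) → ℝ)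
    (hGdef : ∀ p, G 0 p = p.2 0 * p.2 1 ∧ G 1 p = -(1 / 2) * p.2 1 ^ 2)
    (F : ((Fin 2 → ℝ) × (Fin 2 → ℝ)) → ℝ)
    (hF : ∀ p, F p = Real.exp (-(p.1 1)) * p.2 1) :
    (∀ (x y : Fin 2 → ℝ) (l : ℝ), 0 < l → F (x, l • y) = l * F (x, y)) ∧
    (∀ p : (Fin 2 → ℝ) × (Fin 2 → ℝ), 0 < p.2 1 → 0 < F p) ∧
    (∀ i, ∀ p : (Fin 2 → ℝ) × (Fin 2 → ℝ),
      pdx F i p = ∑ j, Ncon G j i p * pdy F j p) ∧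
    (∀ p : (Fin 2 → ℝ) × (Fin 2 → ℝ),
      (Matrix.of fun i j => (1 / 2) * pdy (pdy (fun q => F q ^ 2) j) i p).rank = 1) := by
  have hFe : F = fun q : (Fin 2 → ℝ) × (Fin 2 → ℝ) => Real.exp (-(q.1 1)) * q.2 1 := funext hF
  have hG0 : G 0 = fun q : (Fin 2 → ℝ) × (Fin 2 → ℝ) => q.2 0 * q.2 1 :=
    funext fun p => (hGdef p).1
  have hG1 : G 1 = fun q : (Fin 2 → ℝ) × (Fin 2 → ℝ) => -(1 / 2) * q.2 1 ^ 2 :=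
    funext fun p => (hGdef p).2
  subst hFe
  refine ⟨?_, ?_, ?_, ?_⟩
  · intro x y l hl
    show Real.exp (-(x 1)) * (l • y) 1 = l * (Real.exp (-(x 1)) * y 1)
    simp [Pi.smul_apply]
    ring
  · intro p h
    exact mul_pos (Real.exp_pos _) h
  · intro i p
    rw [Fin.sum_univ_two]
    simp only [Ncon]
    rw [hG0, hG1, pdy_G0, pdy_G1, pdy_F, pdy_F, pdx_F]
    fin_cases i <;> simp [Pi.single_apply] <;> ring
  · intro p
    have hne : Real.exp (-(p.1 1)) ^ 2 ≠ 0 := pow_ne_zero _ (Real.exp_ne_zero _)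
    have hpd : ∀ j : Fin 2,
        pdy (fun q : (Fin 2 → ℝ) × (Fin 2 → ℝ) => (Real.exp (-(q.1 1)) * q.2 1) ^ 2) j
          = fun q : (Fin 2 → ℝ) × (Fin 2 → ℝ) =>
              (2 * (Pi.single j 1 : Fin 2 → ℝ) 1) * (Real.exp (-(q.1 1)) ^ 2 * q.2 1) :=
      fun j => funext fun q => pdy_Fsq j q
    have hM : (Matrix.of fun i j => (1 / 2) *
          pdy (pdy (fun q : (Fin 2 → ℝ) × (Fin 2 → ℝ) => (Real.exp (-(q.1 1)) * q.2 1) ^ 2) j) i p)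
        = Matrix.diagonal ![0, Real.exp (-(p.1 1)) ^ 2] := by
      ext i j
      rw [Matrix.of_apply, hpd j, pdy_g]
      fin_cases i <;> fin_cases j <;>
        simp [Matrix.diagonal, Pi.single_apply]
    rw [hM, Matrix.rank_diagonal]
    have hf : Finset.univ.filter (fun i : Fin 2 => ![0, Real.exp (-(p.1 1)) ^ 2] i ≠ 0)
        = {1} := by
      ext i
      fin_cases i <;> simp [hne]
    rw [Fintype.card_subtype, hf]
    simp
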